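/- arXiv:1801.06071 — 2 statements merged into one kernel-verified Lean document; each statement's English description precedes it below -/
import Mathlib

section
/- Let W be an I-graded formed space whose graded pieces carry δ-forms with signs δ_{w,i}, and suppose the sign is Γ-alternating, i.e., δ_{w,o(h)} · δ_{w,i(h)} = -1 for every arrow h. Then the induced transpose automorphism τ on the quiver variety M_ζ(v,w) is an involution: τ² = 1. In general (without the alternating hypothesis), τ⁴ = 1. -/
noncomputable section

/-- Transport of an `I`-graded vector space along an equality of indices. -/
def vcast {I : Type*} (V : I → Type*) [∀ i, AddCommGroup (V i)] [∀ i, Module ℂ (V i)]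
    {i j : I} (h : i = j) : V i ≃ₗ[ℂ] V j := by
  subst h; exact LinearEquiv.refl ℂ (V i)

namespace TauAux

variable {I : Type*} (V : I → Type*) [∀ i, AddCommGroup (V i)] [∀ i, Module ℂ (V i)]

lemma vcast_rfl {i : I} (e : i = i) (a : V i) : vcast V e a = a := rfl

lemma vcast_trans {i j k : I} (e : i = j) (e' : j = k) (a : V i) :
    vcast V e' (vcast V e a) = vcast V (e.trans e') a := by subst e; subst e'; rfl

lemma vcast_symm {i j : I} (e : i = j) (a : V j) :
    (vcast V e).symm a = vcast V e.symm a := by subst e; rfl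

lemma bilin_vcast (B : ∀ i, V i →ₗ[ℂ] V i →ₗ[ℂ] ℂ) {i j : I} (e : i = j) (a b : V i) :
    B j (vcast V e a) (vcast V e b) = B i a b := by subst e; rfl

lemma xcast {H : Type*} (src tgt : H → I) (x : ∀ h, V (src h) →ₗ[ℂ] V (tgt h))
    {h h' : H} (e : h = h') (a : V (src h')) :
    x h' a = vcast V (congrArg tgt e) (x h ((vcast V (congrArg src e)).symm a)) := by
  subst e; rfl

lemma exists_sigma (M : Type*) [AddCommGroup M] [Module ℂ M] [FiniteDimensional ℂ M]
    (B : M →ₗ[ℂ] M →ₗ[ℂ] ℂ)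
    (hl : ∀ u, (∀ v, B u v = 0) → u = 0) (hr : ∀ v, (∀ u, B u v = 0) → v = 0) :
    ∃ σ : M ≃ₗ[ℂ] M, ∀ a b, B a b = B b (σ a) := by
  have hrank : Module.finrank ℂ M = Module.finrank ℂ (Module.Dual ℂ M) :=
    Subspace.dual_finrank_eq.symm
  have hinj : Function.Injective B := by
    intro a b hab
    have h0 : ∀ v, B (a - b) v = 0 := by
      intro v; rw [map_sub]; rw [hab]; simp
    exact sub_eq_zero.mp (hl _ h0)
  have hinj' : Function.Injective B.flip := by
    intro a b hab
    have h0 : ∀ u, B u (a - b) = 0 := by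
      intro u
      have : B.flip a u = B.flip b u := by rw [hab]
      simp only [LinearMap.flip_apply] at this
      rw [map_sub, this]; simp
    exact sub_eq_zero.mp (hr _ h0)
  have hbij : Function.Bijective (B : M →ₗ[ℂ] Module.Dual ℂ M) :=
    ⟨hinj, (LinearMap.injective_iff_surjective_of_finrank_eq_finrank hrank).mp hinj⟩
  have hbij' : Function.Bijective (B.flip : M →ₗ[ℂ] Module.Dual ℂ M) :=
    ⟨hinj', (LinearMap.injective_iff_surjective_of_finrank_eq_finrank hrank).mp hinj'⟩
  let eA := LinearEquiv.ofBijective _ hbij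
  let eA' := LinearEquiv.ofBijective _ hbij'
  refine ⟨eA.trans eA'.symm, fun a b => ?_⟩
  have h2 : B.flip (eA'.symm (eA a)) = B a := eA'.apply_symm_apply (eA a)
  calc B a b = (B.flip (eA'.symm (eA a))) b := by rw [h2]
  _ = B b ((eA.trans eA'.symm) a) := rfl

lemma conj_x {A B : Type*} [AddCommGroup A] [Module ℂ A] [AddCommGroup B] [Module ℂ B]
    (BA : A →ₗ[ℂ] A →ₗ[ℂ] ℂ) (BB : B →ₗ[ℂ] B →ₗ[ℂ] ℂ)
    (hBBr : ∀ v : B, (∀ u, BB u v = 0) → v = 0)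
    (σA : A ≃ₗ[ℂ] A) (hσA : ∀ a b, BA a b = BA b (σA a))
    (σB : B ≃ₗ[ℂ] B) (hσB : ∀ a b, BB a b = BB b (σB a))
    (c : ℂ) (hc : c * c = 1)
    (f₀ f₂ : A →ₗ[ℂ] B) (g : B →ₗ[ℂ] A)
    (hg : ∀ w u, BA w (g u) = -c * BB (f₀ w) u)
    (hf : ∀ u v, BB u (f₂ v) = c * BA (g u) v) :
    ∀ v, f₂ v = -(σB (f₀ (σA.symm v))) := by
  intro v
  refine sub_eq_zero.mp (hBBr _ fun u => ?_)
  have h1 : BA (g u) v = BA (σA.symm v) (g u) := by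
    have := hσA (σA.symm v) (g u)
    simpa using this.symm
  have key : BB u (f₂ v) = BB u (-(σB (f₀ (σA.symm v)))) := by
    rw [hf, h1, hg, map_neg]
    rw [hσB (f₀ (σA.symm v)) u]
    linear_combination (-(BB u (σB (f₀ (σA.symm v))))) * hc
  rw [map_sub, key, sub_self]

lemma conj_p {Wi Vi : Type*} [AddCommGroup Wi] [Module ℂ Wi] [AddCommGroup Vi] [Module ℂ Vi]
    (BW : Wi →ₗ[ℂ] Wi →ₗ[ℂ] ℂ) (BV : Vi →ₗ[ℂ] Vi →ₗ[ℂ] ℂ)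
    (hBVr : ∀ v : Vi, (∀ u, BV u v = 0) → v = 0)
    (σ : Vi ≃ₗ[ℂ] Vi) (hσ : ∀ a b, BV a b = BV b (σ a))
    (δ : ℂ) (hBWsym : ∀ u v, BW u v = δ * BW v u)
    (p₀ p₂ : Wi →ₗ[ℂ] Vi) (q₁ : Vi →ₗ[ℂ] Wi)
    (h1 : ∀ w v, BV (p₀ w) v = BW w (q₁ v))
    (h2 : ∀ v w, BW (q₁ v) w = -BV v (p₂ w)) :
    ∀ w, p₂ w = (-δ) • σ (p₀ w) := by
  intro w
  refine sub_eq_zero.mp (hBVr _ fun v => ?_)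
  have key : BV v (p₂ w) = BV v ((-δ) • σ (p₀ w)) :=
    calc BV v (p₂ w) = -BW (q₁ v) w := by linear_combination h2 v w
    _ = -(δ * BW w (q₁ v)) := by rw [hBWsym]
    _ = -(δ * BV (p₀ w) v) := by rw [h1]
    _ = -(δ * BV v (σ (p₀ w))) := by rw [hσ (p₀ w) v]
    _ = BV v ((-δ) • σ (p₀ w)) := by rw [map_smul, smul_eq_mul]; ring
  rw [map_sub, key, sub_self]

lemma conj_q {Wi Vi : Type*} [AddCommGroup Wi] [Module ℂ Wi] [AddCommGroup Vi] [Module ℂ Vi]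
    (BW : Wi →ₗ[ℂ] Wi →ₗ[ℂ] ℂ) (BV : Vi →ₗ[ℂ] Vi →ₗ[ℂ] ℂ)
    (hBWr : ∀ v : Wi, (∀ u, BW u v = 0) → v = 0)
    (σ : Vi ≃ₗ[ℂ] Vi) (hσ : ∀ a b, BV a b = BV b (σ a))
    (δ : ℂ) (hBWsym : ∀ u v, BW u v = δ * BW v u)
    (q₀ q₂ : Vi →ₗ[ℂ] Wi) (p₁ : Wi →ₗ[ℂ] Vi)
    (h1 : ∀ v w, BW (q₀ v) w = -BV v (p₁ w))
    (h2 : ∀ w v, BV (p₁ w) v = BW w (q₂ v)) :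
    ∀ v, q₂ v = (-δ) • q₀ (σ.symm v) := by
  intro v
  refine sub_eq_zero.mp (hBWr _ fun w => ?_)
  have hσ' : BV (σ.symm v) (p₁ w) = BV (p₁ w) v := by
    have := hσ (σ.symm v) (p₁ w); simpa using this
  have key : BW w (q₂ v) = BW w ((-δ) • q₀ (σ.symm v)) :=
    calc BW w (q₂ v) = BV (p₁ w) v := (h2 w v).symm
    _ = BV (σ.symm v) (p₁ w) := hσ'.symm
    _ = -BW (q₀ (σ.symm v)) w := by linear_combination h1 (σ.symm v) w
    _ = -(δ * BW w (q₀ (σ.symm v))) := by rw [hBWsym]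
    _ = BW w ((-δ) • q₀ (σ.symm v)) := by rw [map_smul, smul_eq_mul]; ring
  rw [map_sub, key, sub_self]

/-- scaling by `c` with `c * c = 1` as a linear equivalence -/
def smulEquiv {M : Type*} [AddCommGroup M] [Module ℂ M] (c : ℂ) (hc : c * c = 1) :
    M ≃ₗ[ℂ] M where
  toFun v := c • v
  map_add' u v := smul_add c u v
  map_smul' a v := smul_comm c a v
  invFun v := c • v
  left_inv v := by simp [smul_smul, hc]
  right_inv v := by simp [smul_smul, hc]

@[simp] lemma smulEquiv_apply {M : Type*} [AddCommGroup M] [Module ℂ M] (c : ℂ)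
    (hc : c * c = 1) (v : M) : smulEquiv c hc v = c • v := rfl

@[simp] lemma smulEquiv_symm_apply {M : Type*} [AddCommGroup M] [Module ℂ M] (c : ℂ)
    (hc : c * c = 1) (v : M) : (smulEquiv c hc).symm v = c • v := rfl

end TauAux

/-- Let `Γ` be a graph with vertex set `I`, arrow set `H` (with involution `bar` exchanging
source and target), orientation function `ε` with `ε h + ε (bar h) = 0`, and let `V`, `W` be
`I`-graded formed spaces, the forms on `W i` being `δ i`-forms.  The transpose map `τ` on
`M(v,w)` sends `(x, p, q)` to `(ε(h) x*_{h̄}, -q*, p*)`; below a `τ`-step from the point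
indexed `k` to the point indexed `k+1` is recorded by the defining adjoint identities.
Then: if the sign `δ` is `Γ`-alternating, `τ²(x)` lies in the `G_v`-orbit of `x`
(so `τ² = 1` on the quiver variety), and in general `τ⁴(x)` lies in the `G_v`-orbit of `x`
(so `τ⁴ = 1`). -/
theorem tau_squared_eq_one_of_alternating_and_tau_fourth_eq_one
    {I H : Type*} [Fintype I] [Fintype H] [DecidableEq I]
    (src tgt : H → I) (bar : H → H)
    (hbarbar : ∀ h, bar (bar h) = h)
    (hsrc : ∀ h, src (bar h) = tgt h) (htgt : ∀ h, tgt (bar h) = src h)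
    (ε : H → ℂ) (hεsign : ∀ h, ε h = 1 ∨ ε h = -1) (hε : ∀ h, ε h + ε (bar h) = 0)
    (V W : I → Type*)
    [∀ i, AddCommGroup (V i)] [∀ i, Module ℂ (V i)] [∀ i, FiniteDimensional ℂ (V i)]
    [∀ i, AddCommGroup (W i)] [∀ i, Module ℂ (W i)] [∀ i, FiniteDimensional ℂ (W i)]
    (BV : ∀ i, V i →ₗ[ℂ] V i →ₗ[ℂ] ℂ) (BW : ∀ i, W i →ₗ[ℂ] W i →ₗ[ℂ] ℂ)
    (hBVl : ∀ i (u : V i), (∀ v, BV i u v = 0) → u = 0)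
    (hBVr : ∀ i (v : V i), (∀ u, BV i u v = 0) → v = 0)
    (hBWl : ∀ i (u : W i), (∀ v, BW i u v = 0) → u = 0)
    (hBWr : ∀ i (v : W i), (∀ u, BW i u v = 0) → v = 0)
    (δ : I → ℂ) (hδ : ∀ i, δ i = 1 ∨ δ i = -1)
    (hBWsym : ∀ i (u v : W i), BW i u v = δ i * BW i v u)
    -- a chain of five points of `M(v,w)`, each obtained from the previous one by `τ`
    (x : Fin 5 → ∀ h, V (src h) →ₗ[ℂ] V (tgt h))
    (p : Fin 5 → ∀ i, W i →ₗ[ℂ] V i)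
    (q : Fin 5 → ∀ i, V i →ₗ[ℂ] W i)
    (hstep : ∀ k : Fin 4,
      (∀ h (u : V (tgt h)) (v : V (src h)),
        BV (tgt h) u (x k.succ h v)
          = ε h * BV (src h)
              ((vcast V (htgt h)) (x k.castSucc (bar h) ((vcast V (hsrc h)).symm u))) v)
      ∧ (∀ i (v : V i) (w : W i),
          BW i (q k.castSucc i v) w = - BV i v (p k.succ i w))
      ∧ (∀ i (w : W i) (v : V i),
          BV i (p k.castSucc i w) v = BW i w (q k.succ i v))) :
    ((∀ h, δ (src h) * δ (tgt h) = -1) →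
      ∃ g : ∀ i, V i ≃ₗ[ℂ] V i,
        (∀ h, x 2 h = (g (tgt h)).toLinearMap ∘ₗ x 0 h ∘ₗ (g (src h)).symm.toLinearMap)
        ∧ (∀ i, p 2 i = (g i).toLinearMap ∘ₗ p 0 i)
        ∧ (∀ i, q 2 i = q 0 i ∘ₗ (g i).symm.toLinearMap))
    ∧ (∃ g : ∀ i, V i ≃ₗ[ℂ] V i,
        (∀ h, x 4 h = (g (tgt h)).toLinearMap ∘ₗ x 0 h ∘ₗ (g (src h)).symm.toLinearMap)
        ∧ (∀ i, p 4 i = (g i).toLinearMap ∘ₗ p 0 i)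
        ∧ (∀ i, q 4 i = q 0 i ∘ₗ (g i).symm.toLinearMap)) := by
  classical
  choose σ hσ using fun i => TauAux.exists_sigma (V i) (BV i) (hBVl i) (hBVr i)
  have hε2 : ∀ h, ε h * ε h = 1 := fun h => by rcases hεsign h with e | e <;> rw [e] <;> norm_num
  have hδ2 : ∀ i, δ i * δ i = 1 := fun i => by rcases hδ i with e | e <;> rw [e] <;> norm_num
  let y : Fin 5 → ∀ h : H, V (tgt h) →ₗ[ℂ] V (src h) := fun k h =>
    (vcast V (htgt h)).toLinearMap ∘ₗ x k (bar h) ∘ₗ (vcast V (hsrc h)).symm.toLinearMap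
  have hxy : ∀ (k : Fin 4) (h : H) (u : V (tgt h)) (v : V (src h)),
      BV (tgt h) u (x k.succ h v) = ε h * BV (src h) (y k.castSucc h u) v :=
    fun k h u v => (hstep k).1 h u v
  have hyx : ∀ (k : Fin 4) (h : H) (w : V (src h)) (u : V (tgt h)),
      BV (src h) w (y k.succ h u) = -(ε h) * BV (tgt h) (x k.castSucc h w) u := by
    intro k h w u
    have H1 := (hstep k).1 (bar h) ((vcast V (htgt h)).symm w) ((vcast V (hsrc h)).symm u)
    have hεb : ε (bar h) = -ε h := by linear_combination hε h
    have lhs_eq := TauAux.bilin_vcast V BV (htgt h) ((vcast V (htgt h)).symm w)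
      (x k.succ (bar h) ((vcast V (hsrc h)).symm u))
    rw [LinearEquiv.apply_symm_apply] at lhs_eq
    have key : (vcast V (hsrc h)) ((vcast V (htgt (bar h)))
        (x k.castSucc (bar (bar h)) ((vcast V (hsrc (bar h))).symm ((vcast V (htgt h)).symm w))))
        = x k.castSucc h w := by
      have xc := TauAux.xcast V src tgt (x k.castSucc) (hbarbar h) w
      rw [TauAux.vcast_symm] at xc
      simp only [TauAux.vcast_symm, TauAux.vcast_trans]
      exact xc.symm
    have rhs_eq := TauAux.bilin_vcast V BV (hsrc h)
      ((vcast V (htgt (bar h))) (x k.castSucc (bar (bar h))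
        ((vcast V (hsrc (bar h))).symm ((vcast V (htgt h)).symm w))))
      ((vcast V (hsrc h)).symm u)
    rw [LinearEquiv.apply_symm_apply, key] at rhs_eq
    show BV (src h) w ((vcast V (htgt h)) (x k.succ (bar h) ((vcast V (hsrc h)).symm u)))
        = -(ε h) * BV (tgt h) (x k.castSucc h w) u
    rw [lhs_eq, H1, hεb, rhs_eq]
  have hx2 : ∀ (h : H) (v : V (src h)),
      x 2 h v = -((σ (tgt h)) (x 0 h ((σ (src h)).symm v))) := fun h =>
    TauAux.conj_x (BV (src h)) (BV (tgt h)) (hBVr (tgt h)) (σ (src h)) (hσ (src h))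
      (σ (tgt h)) (hσ (tgt h)) (ε h) (hε2 h) (x 0 h) (x 2 h) (y 1 h)
      (fun w u => hyx 0 h w u) (fun u v => hxy 1 h u v)
  have hx4 : ∀ (h : H) (v : V (src h)),
      x 4 h v = -((σ (tgt h)) (x 2 h ((σ (src h)).symm v))) := fun h =>
    TauAux.conj_x (BV (src h)) (BV (tgt h)) (hBVr (tgt h)) (σ (src h)) (hσ (src h))
      (σ (tgt h)) (hσ (tgt h)) (ε h) (hε2 h) (x 2 h) (x 4 h) (y 3 h)
      (fun w u => hyx 2 h w u) (fun u v => hxy 3 h u v)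
  have hp2 : ∀ i (w : W i), p 2 i w = (-δ i) • σ i (p 0 i w) := fun i =>
    TauAux.conj_p (BW i) (BV i) (hBVr i) (σ i) (hσ i) (δ i) (hBWsym i) (p 0 i) (p 2 i) (q 1 i)
      (fun w v => (hstep 0).2.2 i w v) (fun v w => (hstep 1).2.1 i v w)
  have hp4 : ∀ i (w : W i), p 4 i w = (-δ i) • σ i (p 2 i w) := fun i =>
    TauAux.conj_p (BW i) (BV i) (hBVr i) (σ i) (hσ i) (δ i) (hBWsym i) (p 2 i) (p 4 i) (q 3 i)
      (fun w v => (hstep 2).2.2 i w v) (fun v w => (hstep 3).2.1 i v w)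
  have hq2 : ∀ i (v : V i), q 2 i v = (-δ i) • q 0 i ((σ i).symm v) := fun i =>
    TauAux.conj_q (BW i) (BV i) (hBWr i) (σ i) (hσ i) (δ i) (hBWsym i) (q 0 i) (q 2 i) (p 1 i)
      (fun v w => (hstep 0).2.1 i v w) (fun w v => (hstep 1).2.2 i w v)
  have hq4 : ∀ i (v : V i), q 4 i v = (-δ i) • q 2 i ((σ i).symm v) := fun i =>
    TauAux.conj_q (BW i) (BV i) (hBWr i) (σ i) (hσ i) (δ i) (hBWsym i) (q 2 i) (q 4 i) (p 3 i)
      (fun v w => (hstep 2).2.1 i v w) (fun w v => (hstep 3).2.2 i w v)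
  constructor
  · -- τ² = 1 when δ is Γ-alternating
    intro halt
    have hδδ : ∀ i, (-δ i) * (-δ i) = 1 := fun i => by linear_combination hδ2 i
    refine ⟨fun i => (σ i).trans (TauAux.smulEquiv (-δ i) (hδδ i)), ?_, ?_, ?_⟩
    · intro h
      apply LinearMap.ext; intro v
      have hcoef : (-δ (tgt h)) * (-δ (src h)) = -1 := by linear_combination halt h
      show x 2 h v = ((σ (tgt h)).trans (TauAux.smulEquiv (-δ (tgt h)) (hδδ (tgt h))))
        (x 0 h (((σ (src h)).trans (TauAux.smulEquiv (-δ (src h)) (hδδ (src h)))).symm v))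
      have hsymm : (((σ (src h)).trans (TauAux.smulEquiv (-δ (src h)) (hδδ (src h)))).symm v)
          = (-δ (src h)) • (σ (src h)).symm v := by
        show (σ (src h)).symm ((TauAux.smulEquiv (-δ (src h)) (hδδ (src h))).symm v) = _
        rw [TauAux.smulEquiv_symm_apply, map_smul]
      rw [hsymm]
      show x 2 h v = (-δ (tgt h)) • (σ (tgt h)) (x 0 h ((-δ (src h)) • (σ (src h)).symm v))
      rw [map_smul, map_smul, smul_smul, hcoef, neg_one_smul, hx2 h v]
    · intro i
      apply LinearMap.ext; intro w
      show p 2 i w = (-δ i) • σ i (p 0 i w)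
      exact hp2 i w
    · intro i
      apply LinearMap.ext; intro v
      show q 2 i v = q 0 i (((σ i).trans (TauAux.smulEquiv (-δ i) (hδδ i))).symm v)
      have hsymm : (((σ i).trans (TauAux.smulEquiv (-δ i) (hδδ i))).symm v)
          = (-δ i) • (σ i).symm v := by
        show (σ i).symm ((TauAux.smulEquiv (-δ i) (hδδ i)).symm v) = _
        rw [TauAux.smulEquiv_symm_apply, map_smul]
      rw [hsymm, map_smul, hq2 i v]
  · -- τ⁴ = 1 in general
    refine ⟨fun i => (σ i).trans (σ i), ?_, ?_, ?_⟩
    · intro h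
      apply LinearMap.ext; intro v
      show x 4 h v = ((σ (tgt h)).trans (σ (tgt h)))
        (x 0 h (((σ (src h)).trans (σ (src h))).symm v))
      have hsymm : (((σ (src h)).trans (σ (src h))).symm v)
          = (σ (src h)).symm ((σ (src h)).symm v) := rfl
      rw [hsymm]
      show x 4 h v = (σ (tgt h)) ((σ (tgt h)) (x 0 h ((σ (src h)).symm ((σ (src h)).symm v))))
      rw [hx4 h v, hx2 h ((σ (src h)).symm v), map_neg, neg_neg]
    · intro i
      apply LinearMap.ext; intro w
      show p 4 i w = (σ i) ((σ i) (p 0 i w))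
      rw [hp4 i w, hp2 i w, map_smul, smul_smul,
        show (-δ i) * (-δ i) = 1 from by linear_combination hδ2 i, one_smul]
    · intro i
      apply LinearMap.ext; intro v
      show q 4 i v = q 0 i ((σ i).symm ((σ i).symm v))
      rw [hq4 i v, hq2 i ((σ i).symm v), smul_smul,
        show (-δ i) * (-δ i) = 1 from by linear_combination hδ2 i, one_smul]
  
end
end

section
/- If operators K₁(u), K₂(v) acting on a tensor product F₁ ⊗ F₂ ⊗ F₃ (acting on the first, resp. second factor, tensored with identity elsewhere) and R-matrices R_{ij}(z) satisfy: (a) the reflection equation R₁₂(u-v) K₁(u) R₁₂(u+v) K₂(v) = K₂(v) R₁₂(u+v) K₁(u) R₁₂(u-v); (b) the modified Yang–Baxter equation R₁₃(u-w) R₁₂(u+v) R₂₃(v-w) = R₂₃(v-w) R₁₂(u+v) R₁₃(u-w) and the usual Yang-Baxter-type commutation allowing reordering; and (c) K_i(a) commutes with R_{jk}(z) whenever i ∉ {j,k}; then the dressed operators S₁(u) = R₁₃(u-w) K₁(u) R₁₃(u-w) and S₂(v) = R₂₃(v-w) K₂(v) R₂₃(v-w) also satisfy the reflection equation: R₁₂(u-v)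 S₁(u) R₁₂(u+v) S₂(v) = S₂(v) R₁₂(u+v) S₁(u) R₁₂(u-v). -/
private lemma L2 {M : Type*} [Monoid M] {a b a' b' : M}
    (h : a * b = a' * b') (y : M) : a * (b * y) = a' * (b' * y) := by
  rw [← mul_assoc, h, mul_assoc]

private lemma L3 {M : Type*} [Monoid M] {a b c a' b' c' : M}
    (h : a * b * c = a' * b' * c') (y : M) :
    a * (b * (c * y)) = a' * (b' * (c' * y)) := by
  rw [← mul_assoc, ← mul_assoc, h, mul_assoc, mul_assoc]

private lemma E3 {M : Type*} [Monoid M] {a b c a' b' c' : M}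
    (h : a * b * c = a' * b' * c') : a * (b * c) = a' * (b' * c') := by
  rw [← mul_assoc, h, mul_assoc]

private lemma L4 {M : Type*} [Monoid M] {a b c d a' b' c' d' : M}
    (h : a * b * c * d = a' * b' * c' * d') (y : M) :
    a * (b * (c * (d * y))) = a' * (b' * (c' * (d' * y))) := by
  rw [← mul_assoc, ← mul_assoc, ← mul_assoc, h, mul_assoc, mul_assoc, mul_assoc]

/-- If `K₁, K₂` and R-matrices `R₁₂, R₁₃, R₂₃` satisfy (a) the reflection equation,
(b) the modified Yang–Baxter equation and the Yang–Baxter equation, and (c) `K_i` commutes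
with `R_{jk}` for `i ∉ {j,k}`, then the dressed operators
`S₁(u) = R₁₃(u-w) K₁(u) R₁₃(u-w)` and `S₂(v) = R₂₃(v-w) K₂(v) R₂₃(v-w)` also satisfy the
reflection equation. -/
theorem dressed_reflection_equation
    {M : Type*} [Monoid M] {A : Type*} [AddCommGroup A]
    (K₁ K₂ R₁₂ R₁₃ R₂₃ : A → M)
    (hrefl : ∀ u v, R₁₂ (u - v) * K₁ u * R₁₂ (u + v) * K₂ v
        = K₂ v * R₁₂ (u + v) * K₁ u * R₁₂ (u - v))
    (hmYBE : ∀ u v w, R₁₃ (u - w) * R₁₂ (u + v) * R₂₃ (v - w)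
        = R₂₃ (v - w) * R₁₂ (u + v) * R₁₃ (u - w))
    (hYBE : ∀ u v w, R₁₂ (u - v) * R₁₃ (u - w) * R₂₃ (v - w)
        = R₂₃ (v - w) * R₁₃ (u - w) * R₁₂ (u - v))
    (hK₁R₂₃ : ∀ a b, K₁ a * R₂₃ b = R₂₃ b * K₁ a)
    (hK₂R₁₃ : ∀ a b, K₂ a * R₁₃ b = R₁₃ b * K₂ a) :
    ∀ u v w,
      R₁₂ (u - v) * (R₁₃ (u - w) * K₁ u * R₁₃ (u - w)) * R₁₂ (u + v)
          * (R₂₃ (v - w) * K₂ v * R₂₃ (v - w))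
        = (R₂₃ (v - w) * K₂ v * R₂₃ (v - w)) * R₁₂ (u + v)
          * (R₁₃ (u - w) * K₁ u * R₁₃ (u - w)) * R₁₂ (u - v) := by
  intro u v w
  simp only [mul_assoc]
  conv_lhs =>
    rw [L3 (hmYBE u v w)]
    rw [L2 (hK₁R₂₃ u (v - w))]
    rw [← L2 (hK₂R₁₃ v (u - w))]
    rw [L3 (hYBE u v w)]
    rw [L4 (hrefl u v)]
    rw [← L2 (hK₂R₁₃ v (u - w))]
    rw [E3 (hYBE u v w)]
    rw [L2 (hK₁R₂₃ u (v - w))]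
    rw [L3 (hmYBE u v w)]
end
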